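/- If F is a distribution function on (0,∞) with 1-F(x) = x^{-α} ℓ(x) for a slowly varying ℓ and 0 < α < 1, then for u > 0, t ∫_{y(t)}^∞ e^{-ux/U(t)} dF(x) where y(t) = U(t/z) (with U the tail quantile function, U(y) = F^←(1-1/y)) converges as t → ∞ to z ∫_0^1 e^{-u(zρ)^{-1/α}} dρ for each fixed z > 0. -/

import Mathlib

open MeasureTheory Filter Set

lemma ftc_exp (c : ℝ) (hc : 0 < c) (a x : ℝ) (hax : a ≤ x) :
    ∫ y in Ioo a x, c * Real.exp (-(c * y)) = Real.exp (-(c*a)) - Real.exp (-(c*x)) := by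
  rw [← integral_Ioc_eq_integral_Ioo, ← intervalIntegral.integral_of_le hax]
  have hd : ∀ y : ℝ, HasDerivAt (fun y => -Real.exp (-(c * y))) (c * Real.exp (-(c * y))) y := by
    intro y
    have h := (((hasDerivAt_id y).const_mul c).neg.exp).neg
    refine h.congr_deriv ?_
    simp only [Pi.neg_apply, id_eq, mul_one]; ring
  rw [intervalIntegral.integral_eq_sub_of_hasDerivAt (fun y _ => hd y)
    (Continuous.intervalIntegrable (by continuity) _ _)]
  ring

lemma exp_tail_identity (ν : Measure ℝ) [IsProbabilityMeasure ν]
    (c a : ℝ) (hc : 0 < c) :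
    ∫ x in Ioi a, Real.exp (-(c * x)) ∂ν
      = Real.exp (-(c * a)) * (ν (Ioi a)).toReal
        - ∫ y in Ioi a, c * Real.exp (-(c * y)) * (ν (Ioi y)).toReal := by
  have hmeas_nu : Measurable fun y : ℝ => (ν (Ioi y)).toReal := by
    apply Antitone.measurable
    intro x y hxy
    exact ENNReal.toReal_mono (measure_ne_top ν _) (measure_mono (Ioi_subset_Ioi hxy))
  have hbd : IntegrableOn (fun y => c * Real.exp (-(c*y))) (Ioi a) := by
    refine (show Integrable (fun y => c * Real.exp (-(c*y))) (volume.restrict (Ioi a)) from ?_)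
    simpa [neg_mul] using (exp_neg_integrableOn_Ioi a hc).const_mul c
  have hint_exp : Integrable (fun x => Real.exp (-(c * x))) (ν.restrict (Ioi a)) := by
    refine Integrable.mono' (integrable_const (Real.exp (-(c*a)))) ?_ ?_
    · exact (Continuous.stronglyMeasurable (by continuity)).aestronglyMeasurable
    · filter_upwards [ae_restrict_mem measurableSet_Ioi] with x hx
      rw [Real.norm_eq_abs, abs_of_pos (Real.exp_pos _)]
      exact Real.exp_le_exp.2 (by nlinarith [le_of_lt (show a < x from hx)])
  have key : ∫ y in Ioi a, c * Real.exp (-(c * y)) * (ν (Ioi y)).toReal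
      = Real.exp (-(c*a)) * (ν (Ioi a)).toReal - ∫ x in Ioi a, Real.exp (-(c * x)) ∂ν := by
    have h1 : ∀ y : ℝ, c * Real.exp (-(c * y)) * (ν (Ioi y)).toReal
        = ∫ x, (Ioi y).indicator (fun _ => c * Real.exp (-(c * y))) x ∂ν := by
      intro y
      rw [integral_indicator measurableSet_Ioi, setIntegral_const, smul_eq_mul, mul_comm, measureReal_def]
    simp_rw [h1]
    have hintf : Integrable
        (Function.uncurry fun y x => (Ioi y).indicator (fun _ => c * Real.exp (-(c * y))) x)
        ((volume.restrict (Ioi a)).prod ν) := by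
      have heq : (Function.uncurry fun y x =>
            (Ioi y).indicator (fun _ => c * Real.exp (-(c * y))) x)
          = {q : ℝ × ℝ | q.1 < q.2}.indicator (fun q => c * Real.exp (-(c * q.1))) := by
        ext ⟨y0, x0⟩
        simp only [Function.uncurry_apply_pair]
        by_cases h : (y0, x0).1 < (y0, x0).2
        · rw [Set.indicator_of_mem (show x0 ∈ Ioi y0 from h),
            Set.indicator_of_mem (show ((y0, x0) : ℝ × ℝ) ∈ {q : ℝ × ℝ | q.1 < q.2} from h)]
        · rw [Set.indicator_of_notMem (show x0 ∉ Ioi y0 from h),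
            Set.indicator_of_notMem (show ((y0, x0) : ℝ × ℝ) ∉ {q : ℝ × ℝ | q.1 < q.2} from h)]
      have hmes : AEStronglyMeasurable
          (Function.uncurry fun y x => (Ioi y).indicator (fun _ => c * Real.exp (-(c * y))) x)
          ((volume.restrict (Ioi a)).prod ν) := by
        rw [heq]
        exact ((Continuous.stronglyMeasurable (by continuity)).indicator
          (measurableSet_lt measurable_fst measurable_snd)).aestronglyMeasurable
      rw [integrable_prod_iff hmes]
      constructor
      · refine Eventually.of_forall fun y => ?_
        simp only [Function.uncurry_apply_pair]
        exact (integrable_const _).indicator measurableSet_Ioi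
      · have hval : (fun y => ∫ x, ‖(Ioi y).indicator (fun _ => c * Real.exp (-(c * y))) x‖ ∂ν)
            = fun y => c * Real.exp (-(c * y)) * (ν (Ioi y)).toReal := by
          funext y
          simp_rw [norm_indicator_eq_indicator_norm]
          rw [integral_indicator measurableSet_Ioi, setIntegral_const, smul_eq_mul,
            Real.norm_eq_abs, abs_of_pos (by positivity), mul_comm, measureReal_def]
        simp only [Function.uncurry_apply_pair]
        rw [hval]
        refine Integrable.mono' hbd ?_ ?_
        · exact (((Continuous.measurable (by continuity)).mul hmeas_nu)).aestronglyMeasurable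
        · refine Eventually.of_forall fun y => ?_
          rw [Real.norm_eq_abs, abs_of_nonneg (by positivity)]
          have h1 : (ν (Ioi y)).toReal ≤ 1 := by
            rw [← ENNReal.toReal_one]
            exact ENNReal.toReal_mono (by simp) prob_le_one
          have h2 : 0 < c * Real.exp (-(c * y)) := by positivity
          nlinarith [ENNReal.toReal_nonneg (a := ν (Ioi y))]
    have hswap := MeasureTheory.integral_integral_swap
      (f := fun y x => (Ioi y).indicator (fun _ => c * Real.exp (-(c * y))) x)
      (μ := volume.restrict (Ioi a)) (ν := ν) hintf
    rw [hswap]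
    have h2 : ∀ x : ℝ, (∫ y in Ioi a, (Ioi y).indicator (fun _ => c * Real.exp (-(c * y))) x)
        = (Ioi a).indicator (fun x => Real.exp (-(c*a)) - Real.exp (-(c*x))) x := by
      intro x
      have hfun : (fun y => (Ioi y).indicator (fun _ => c * Real.exp (-(c * y))) x)
          = (Iio x).indicator (fun y => c * Real.exp (-(c * y))) := by
        ext y
        by_cases h : y < x
        · rw [Set.indicator_of_mem (show x ∈ Ioi y from h),
            Set.indicator_of_mem (show y ∈ Iio x from h)]
        · rw [Set.indicator_of_notMem (show x ∉ Ioi y from h),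
            Set.indicator_of_notMem (show y ∉ Iio x from h)]
      rw [hfun, integral_indicator measurableSet_Iio,
        Measure.restrict_restrict measurableSet_Iio]
      by_cases hax : a < x
      · rw [Set.indicator_of_mem (show x ∈ Ioi a from hax), Iio_inter_Ioi,
          ftc_exp c hc a x hax.le]
      · rw [Set.indicator_of_notMem (show x ∉ Ioi a from hax)]
        have hempty : Iio x ∩ Ioi a = ∅ := by
          ext y; simp only [mem_inter_iff, mem_Iio, mem_Ioi, mem_empty_iff_false, iff_false]
          rintro ⟨h1, h2⟩; exact hax (h2.trans h1)
        rw [hempty]; simp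
    simp_rw [h2]
    rw [integral_indicator measurableSet_Ioi, integral_sub (integrable_const _) hint_exp,
      setIntegral_const, smul_eq_mul]
    rw [measureReal_def]
    ring
  rw [key]; ring


lemma vz_pow (α z : ℝ) (hα0 : 0 < α) (hz : 0 < z) : (z ^ (-(1/α))) ^ (-α) = z := by
  rw [← Real.rpow_mul hz.le]
  have h : -(1/α) * -α = 1 := by field_simp
  rw [h, Real.rpow_one]

lemma final_identity (α z u : ℝ) (hα0 : 0 < α) (hα1 : α < 1) (hz : 0 < z) (hu : 0 < u) :
    z * ∫ ρ in Ioo (0:ℝ) 1, Real.exp (-(u * (z * ρ) ^ (-(1/α))))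
      = z * Real.exp (-(u * z ^ (-(1/α))))
        - ∫ w in Ioi (z ^ (-(1/α))), u * Real.exp (-(u * w)) * w ^ (-α) := by
  set v : ℝ := z ^ (-(1/α)) with hv
  have hv0 : 0 < v := Real.rpow_pos_of_pos hz _
  have hvz : v ^ (-α) = z := vz_pow α z hα0 hz
  set f : ℝ → ℝ := fun w => w ^ (-α) * z⁻¹ with hf
  have hinj : InjOn f (Ioi v) := by
    have : StrictAntiOn f (Ioi v) := by
      intro x hx y hy hxy
      have hx0 : 0 < x := hv0.trans hx
      exact mul_lt_mul_of_pos_right (Real.rpow_lt_rpow_of_neg hx0 hxy (by linarith))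
        (inv_pos.2 hz)
    exact this.injOn
  have himg : f '' (Ioi v) = Ioo (0:ℝ) 1 := by
    apply Subset.antisymm
    · rintro ρ ⟨w, hw, rfl⟩
      have hw0 : 0 < w := hv0.trans hw
      constructor
      · have : 0 < w ^ (-α) := Real.rpow_pos_of_pos hw0 _
        positivity
      · have h1 : w ^ (-α) < v ^ (-α) := Real.rpow_lt_rpow_of_neg hv0 hw (by linarith)
        rw [hvz] at h1
        calc w ^ (-α) * z⁻¹ < z * z⁻¹ := mul_lt_mul_of_pos_right h1 (inv_pos.2 hz)
        _ = 1 := mul_inv_cancel₀ hz.ne'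
    · rintro ρ ⟨hρ0, hρ1⟩
      refine ⟨(z * ρ) ^ (-(1/α)), ?_, ?_⟩
      · have hzρ : 0 < z * ρ := by positivity
        have : z * ρ < z := by nlinarith
        exact Real.rpow_lt_rpow_of_neg hzρ this (by simp; positivity)
      · have hzρ : 0 < z * ρ := by positivity
        show ((z * ρ) ^ (-(1/α))) ^ (-α) * z⁻¹ = ρ
        rw [vz_pow α (z*ρ) hα0 hzρ]
        field_simp
  have hf' : ∀ w ∈ Ioi v, HasDerivWithinAt f (-α * w ^ (-α - 1) * z⁻¹) (Ioi v) w := by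
    intro w hw
    have hw0 : 0 < w := hv0.trans hw
    exact ((Real.hasDerivAt_rpow_const (Or.inl hw0.ne')).mul_const z⁻¹).hasDerivWithinAt
  have hsub := integral_image_eq_integral_abs_deriv_smul measurableSet_Ioi hf' hinj
    (fun ρ => Real.exp (-(u * (z * ρ) ^ (-(1/α)))))
  rw [himg] at hsub
  -- rewrite the substituted integrand
  have hcongr : ∀ w ∈ Ioi v, |(-α * w ^ (-α - 1) * z⁻¹)| •
      Real.exp (-(u * (z * f w) ^ (-(1/α))))
      = z⁻¹ * (α * w ^ (-α - 1) * Real.exp (-(u * w))) := by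
    intro w hw
    have hw0 : 0 < w := hv0.trans hw
    have hp : 0 < w ^ (-α - 1) := Real.rpow_pos_of_pos hw0 _
    have h1 : z * f w = w ^ (-α) := by
      rw [hf]; field_simp
    have h2 : (w ^ (-α)) ^ (-(1/α)) = w := by
      rw [← Real.rpow_mul hw0.le]
      have : -α * -(1/α) = 1 := by field_simp
      rw [this, Real.rpow_one]
    rw [h1, h2, smul_eq_mul, abs_of_neg (by nlinarith [mul_pos hp (inv_pos.2 hz)])]
    ring
  rw [setIntegral_congr_fun measurableSet_Ioi hcongr] at hsub
  have hIA : IntegrableOn (fun w => α * w ^ (-α - 1) * Real.exp (-(u * w))) (Ioi v) := by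
    have hexp : IntegrableOn (fun w => Real.exp (-(u*w))) (Ioi v) := by
      simpa [neg_mul] using exp_neg_integrableOn_Ioi v hu
    refine Integrable.mono' (hexp.const_mul (α * v ^ (-α - 1))) ?_ ?_
    · refine ContinuousOn.aestronglyMeasurable ?_ measurableSet_Ioi
      refine ContinuousOn.mul (ContinuousOn.mul continuousOn_const ?_)
        (Continuous.continuousOn (by continuity))
      intro w hw
      exact (Real.continuousAt_rpow_const w _ (Or.inl (hv0.trans hw).ne')).continuousWithinAt
    · filter_upwards [ae_restrict_mem measurableSet_Ioi] with w hw
      have hw0 : 0 < w := hv0.trans hw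
      have hle : w ^ (-α - 1) ≤ v ^ (-α - 1) :=
        Real.rpow_le_rpow_of_nonpos hv0 (le_of_lt hw) (by linarith)
      rw [Real.norm_eq_abs, abs_of_nonneg (by positivity)]
      have hE : 0 < Real.exp (-(u*w)) := Real.exp_pos _
      have h3 := mul_le_mul_of_nonneg_right (mul_le_mul_of_nonneg_left hle hα0.le) hE.le
      linarith [h3]
  have hIB : IntegrableOn (fun w => u * Real.exp (-(u * w)) * w ^ (-α)) (Ioi v) := by
    have hexp : IntegrableOn (fun w => Real.exp (-(u*w))) (Ioi v) := by
      simpa [neg_mul] using exp_neg_integrableOn_Ioi v hu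
    refine Integrable.mono' (hexp.const_mul (u * v ^ (-α))) ?_ ?_
    · refine ContinuousOn.aestronglyMeasurable ?_ measurableSet_Ioi
      refine ContinuousOn.mul (Continuous.continuousOn (by continuity)) ?_
      intro w hw
      exact (Real.continuousAt_rpow_const w _ (Or.inl (hv0.trans hw).ne')).continuousWithinAt
    · filter_upwards [ae_restrict_mem measurableSet_Ioi] with w hw
      have hw0 : 0 < w := hv0.trans hw
      have hle : w ^ (-α) ≤ v ^ (-α) :=
        Real.rpow_le_rpow_of_nonpos hv0 (le_of_lt hw) (by linarith)
      rw [Real.norm_eq_abs, abs_of_nonneg (by positivity)]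
      have hE : 0 < Real.exp (-(u*w)) := Real.exp_pos _
      have h3 := mul_le_mul_of_nonneg_left hle (mul_pos hu hE).le
      nlinarith [h3]
  -- FTC part
  have hftc : ∫ w in Ioi v, (α * w ^ (-α - 1) * Real.exp (-(u * w))
      + u * Real.exp (-(u * w)) * w ^ (-α)) = z * Real.exp (-(u * v)) := by
    set g : ℝ → ℝ := fun w => -(w ^ (-α) * Real.exp (-(u * w))) with hg
    have hderiv : ∀ w ∈ Ioi v, HasDerivAt g
        (α * w ^ (-α - 1) * Real.exp (-(u * w)) + u * Real.exp (-(u * w)) * w ^ (-α)) w := by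
      intro w hw
      have hw0 : 0 < w := hv0.trans hw
      have h1 : HasDerivAt (fun w : ℝ => w ^ (-α)) (-α * w ^ (-α - 1)) w :=
        Real.hasDerivAt_rpow_const (Or.inl hw0.ne')
      have h2 : HasDerivAt (fun w : ℝ => Real.exp (-(u * w))) (Real.exp (-(u*w)) * (-u)) w := by
        have := (((hasDerivAt_id w).const_mul u).neg.exp)
        refine this.congr_deriv ?_
        simp only [Pi.neg_apply, id_eq, mul_one]
      have := (h1.mul h2).neg
      refine this.congr_deriv ?_
      ring
    have htend : Tendsto g atTop (nhds 0) := by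
      have h1 : Tendsto (fun w : ℝ => w ^ (-α)) atTop (nhds 0) := tendsto_rpow_neg_atTop hα0
      have h2 : Tendsto (fun w : ℝ => Real.exp (-(u * w))) atTop (nhds 0) := by
        apply Real.tendsto_exp_neg_atTop_nhds_zero.comp
        exact Tendsto.const_mul_atTop hu tendsto_id
      have := (h1.mul h2).neg
      simpa using this
    have hcont : ContinuousWithinAt g (Ici v) v := by
      apply ContinuousAt.continuousWithinAt
      exact (((Real.continuousAt_rpow_const v _ (Or.inl hv0.ne')).mul
        (by continuity : Continuous fun w : ℝ => Real.exp (-(u*w))).continuousAt).neg)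
    rw [integral_Ioi_of_hasDerivAt_of_tendsto hcont hderiv (hIA.add hIB) htend]
    simp only [hg, hvz]
    ring
  rw [integral_add hIA hIB] at hftc
  have hmul : z * ∫ w in Ioi v, z⁻¹ * (α * w ^ (-α - 1) * Real.exp (-(u * w)))
      = ∫ w in Ioi v, α * w ^ (-α - 1) * Real.exp (-(u * w)) := by
    rw [MeasureTheory.integral_const_mul, ← mul_assoc, mul_inv_cancel₀ hz.ne', one_mul]
  rw [hsub, hmul]
  linarith [hftc]


lemma vz_pow' (α z : ℝ) (hα0 : 0 < α) (hz : 0 < z) : (z ^ (-(1/α))) ^ (-α) = z := by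
  rw [← Real.rpow_mul hz.le]
  have h : -(1/α) * -α = 1 := by field_simp
  rw [h, Real.rpow_one]

set_option maxHeartbeats 2000000 in
/-- Let `ν` be the law of a positive random variable with distribution function
`F x = ν(-∞, x]` satisfying `1 - F(x) = x^{-α} ℓ(x)` for `0 < α < 1` and a slowly varying
`ℓ`, and let `U(y) = inf {x | 1 - 1/y ≤ F x}` be the tail quantile function. Then for fixed
`z > 0` and `u > 0`,
`t ∫_{U(t/z)}^∞ e^{-u x/U(t)} dF(x) → z ∫_0^1 e^{-u(zρ)^{-1/α}} dρ` as `t → ∞`. -/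
theorem tail_integral_limit_regular_variation
    (ν : Measure ℝ) [IsProbabilityMeasure ν] (hsupp : ν (Set.Iic 0) = 0)
    (F : ℝ → ℝ) (hF : ∀ x, F x = (ν (Set.Iic x)).toReal)
    (α : ℝ) (hα0 : 0 < α) (hα1 : α < 1)
    (ℓ : ℝ → ℝ) (hℓpos : ∀ x, 0 < x → 0 < ℓ x)
    (hℓslow : ∀ c : ℝ, 0 < c → Tendsto (fun x => ℓ (c * x) / ℓ x) atTop (nhds 1))
    (htail : ∀ x, 0 < x → 1 - F x = x ^ (-α) * ℓ x)
    (U : ℝ → ℝ) (hU : ∀ y, 1 < y → U y = sInf {x : ℝ | 1 - 1 / y ≤ F x})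
    (z u : ℝ) (hz : 0 < z) (hu : 0 < u) :
    Tendsto (fun t : ℝ => t * ∫ x in Set.Ioi (U (t / z)), Real.exp (-(u * x / U t)) ∂ν)
      atTop
      (nhds (z * ∫ ρ in Set.Ioo (0 : ℝ) 1, Real.exp (-(u * (z * ρ) ^ (-(1 / α)))))) := by
  -- basic facts about F
  have hFmono : Monotone F := fun a b hab => by
    rw [hF, hF]
    exact ENNReal.toReal_mono (measure_ne_top ν _) (measure_mono (Iic_subset_Iic.2 hab))
  have hFle1 : ∀ x, F x ≤ 1 := fun x => by
    rw [hF, ← ENNReal.toReal_one]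
    exact ENNReal.toReal_mono (by simp) prob_le_one
  have hF0 : ∀ x ≤ 0, F x = 0 := fun x hx => by
    rw [hF, measure_mono_null (Iic_subset_Iic.2 hx) hsupp, ENNReal.toReal_zero]
  have hFcdf : F = fun x => (ProbabilityTheory.cdf ν) x := by
    funext x; rw [hF, ProbabilityTheory.cdf_eq_real, measureReal_def]
  have hFrc : ∀ x : ℝ, ContinuousWithinAt F (Ici x) x := by
    intro x; rw [hFcdf]
    exact (ProbabilityTheory.cdf ν).right_continuous x
  have hFtop : Tendsto F atTop (nhds 1) := by
    rw [hFcdf]; exact ProbabilityTheory.tendsto_cdf_atTop ν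
  have hFlt1 : ∀ x, 0 < x → F x < 1 := fun x hx => by
    have h := htail x hx
    have h2 : 0 < x ^ (-α) * ℓ x := mul_pos (Real.rpow_pos_of_pos hx _) (hℓpos x hx)
    linarith
  -- G = tail function
  set G : ℝ → ℝ := fun x => 1 - F x with hGdef
  have hGanti : Antitone G := fun a b hab => by simp only [hGdef]; linarith [hFmono hab]
  have hGnonneg : ∀ x, 0 ≤ G x := fun x => by simp only [hGdef]; linarith [hFle1 x]
  have hGtail : ∀ x, 0 < x → G x = x ^ (-α) * ℓ x := fun x hx => htail x hx
  have hνG : ∀ y : ℝ, (ν (Ioi y)).toReal = G y := by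
    intro y
    have h1 : ν (Ioi y) = 1 - ν (Iic y) := by
      rw [← compl_Iic]
      rw [measure_compl measurableSet_Iic (measure_ne_top ν _), measure_univ]
    rw [h1, ENNReal.toReal_sub_of_le prob_le_one (by simp), ENNReal.toReal_one]
    simp only [hGdef]
    rw [hF y]
  -- the set S and basic U facts
  set S : ℝ → Set ℝ := fun t => {x : ℝ | 1 - 1 / t ≤ F x} with hSdef
  have hSmem : ∀ t : ℝ, 1 < t → ∀ x ∈ S t, 0 < x := by
    intro t ht x hx
    by_contra hx0
    push_neg at hx0
    have h1 : F x = 0 := hF0 x hx0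
    have h2 : (0:ℝ) < 1 - 1/t := by
      have : 1/t < 1 := by rw [div_lt_one (by linarith)]; linarith
      linarith
    have := hx.out
    rw [h1] at this
    linarith
  have hSbdd : ∀ t : ℝ, 1 < t → BddBelow (S t) :=
    fun t ht => ⟨0, fun x hx => (hSmem t ht x hx).le⟩
  have hSne : ∀ t : ℝ, 1 < t → (S t).Nonempty := by
    intro t ht
    have h2 : (1:ℝ) - 1/t < 1 := by
      have : (0:ℝ) < 1/t := by positivity
      linarith
    obtain ⟨x, hx⟩ := (hFtop.eventually (eventually_ge_nhds h2)).exists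
    exact ⟨x, hx⟩
  have hU0 : ∀ t : ℝ, 1 < t → 0 ≤ U t := by
    intro t ht
    rw [hU t ht]
    exact le_csInf (hSne t ht) (fun x hx => (hSmem t ht x hx).le)
  have hUle : ∀ t : ℝ, 1 < t → ∀ x, 1 - 1/t ≤ F x → U t ≤ x := by
    intro t ht x hx
    rw [hU t ht]
    exact csInf_le (hSbdd t ht) hx
  have hUge : ∀ t : ℝ, 1 < t → ∀ b, F b < 1 - 1/t → b ≤ U t := by
    intro t ht b hb
    rw [hU t ht]
    refine le_csInf (hSne t ht) (fun s hs => ?_)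
    by_contra hsb
    push_neg at hsb
    exact absurd (le_trans hs.out (hFmono hsb.le)) (not_le.2 hb)
  have hUmem : ∀ t : ℝ, 1 < t → 1 - 1/t ≤ F (U t) := by
    intro t ht
    have hev : ∀ᶠ y in nhdsWithin (U t) (Ioi (U t)), 1 - 1/t ≤ F y := by
      filter_upwards [self_mem_nhdsWithin] with y hy
      rw [hU t ht] at hy
      obtain ⟨s, hs, hsy⟩ := (csInf_lt_iff (hSbdd t ht) (hSne t ht)).1 hy
      exact le_trans hs.out (hFmono hsy.le)
    have htd : Tendsto F (nhdsWithin (U t) (Ioi (U t))) (nhds (F (U t))) :=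
      (hFrc (U t)).mono_left (nhdsWithin_mono _ Ioi_subset_Ici_self)
    exact ge_of_tendsto htd hev
  have hUlt : ∀ t : ℝ, 1 < t → ∀ x, x < U t → F x < 1 - 1/t := by
    intro t ht x hx
    by_contra hc
    push_neg at hc
    exact absurd (hUle t ht x hc) (not_le.2 hx)
  -- U tends to infinity
  have hUtop : Tendsto U atTop atTop := by
    rw [tendsto_atTop]
    intro M
    set M' := max M 1 with hM'
    have hM'0 : 0 < M' := lt_of_lt_of_le one_pos (le_max_right _ _)
    have hFM' : F M' < 1 := hFlt1 M' hM'0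
    have h0 : Tendsto (fun t : ℝ => 1/t) atTop (nhds 0) := by
      simpa [one_div] using tendsto_inv_atTop_zero
    have hev1 : ∀ᶠ t : ℝ in atTop, 1/t < 1 - F M' :=
      h0.eventually (eventually_lt_nhds (by linarith))
    filter_upwards [hev1, eventually_gt_atTop (1:ℝ)] with t h1t h2t
    have : M' ≤ U t := hUge t h2t M' (by linarith)
    exact le_trans (le_max_left _ _) this
  have hUpos : ∀ᶠ t : ℝ in atTop, 0 < U t := hUtop.eventually_gt_atTop 0
  -- (B1) : t * G (U t) → 1
  have hB1 : Tendsto (fun t => t * G (U t)) atTop (nhds 1) := by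
    rw [Metric.tendsto_nhds]
    intro ε hε
    set δ : ℝ := min (ε/4) (1/2) with hδdef
    have hδ0 : 0 < δ := lt_min (by linarith) (by norm_num)
    have hδ1 : δ ≤ 1/2 := min_le_right _ _
    have hδε : δ ≤ ε/4 := min_le_left _ _
    have h1δ : 0 < 1 - δ := by linarith
    clear_value δ
    have hratio : Tendsto (fun t => ℓ ((1-δ) * U t) / ℓ (U t)) atTop (nhds 1) :=
      (hℓslow (1-δ) h1δ).comp hUtop
    have hratev : ∀ᶠ t : ℝ in atTop, ℓ ((1-δ) * U t) / ℓ (U t) < 1 + δ :=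
      hratio.eventually (eventually_lt_nhds (by linarith))
    filter_upwards [hratev, hUpos, eventually_gt_atTop (1:ℝ)] with t hrat hUt h1t
    have ht0 : (0:ℝ) < t := by linarith
    have hup : t * G (U t) ≤ 1 := by
      have h := hUmem t h1t
      have hh : G (U t) ≤ 1 / t := by simp only [hGdef]; linarith
      calc t * G (U t) ≤ t * (1/t) := by nlinarith
      _ = 1 := by field_simp
    have hδU : 0 < (1-δ) * U t := by positivity
    have hlowF : F ((1-δ) * U t) < 1 - 1/t := hUlt t h1t _ (by nlinarith)
    have hGlt : 1/t < G ((1-δ) * U t) := by simp only [hGdef]; linarith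
    have hGx : G ((1-δ) * U t) = ((1-δ) * U t) ^ (-α) * ℓ ((1-δ) * U t) := hGtail _ hδU
    have hGU : G (U t) = (U t) ^ (-α) * ℓ (U t) := hGtail _ hUt
    have hℓU : 0 < ℓ (U t) := hℓpos _ hUt
    have hℓδU : 0 < ℓ ((1-δ) * U t) := hℓpos _ hδU
    set B : ℝ := t * (U t) ^ (-α) with hBdef
    have hBpos : 0 < B := mul_pos ht0 (Real.rpow_pos_of_pos hUt _)
    set L1 : ℝ := ℓ (U t) with hL1def
    set L2 : ℝ := ℓ ((1-δ) * U t) with hL2def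
    clear_value B L1 L2
    have hc : (0:ℝ) < (1-δ) ^ α := Real.rpow_pos_of_pos h1δ _
    have hcinv : (0:ℝ) < (1-δ) ^ (-α) := Real.rpow_pos_of_pos h1δ _
    have h3 : (1-δ:ℝ) ^ (-α) * (1-δ:ℝ) ^ α = 1 := by
      rw [← Real.rpow_add h1δ]; simp
    have h1' : B * ((1-δ:ℝ) ^ (-α)) * L2 > 1 := by
      have h1'' : t * G ((1-δ) * U t) > 1 := by
        calc t * G ((1-δ) * U t) > t * (1/t) := by nlinarith
        _ = 1 := by field_simp
      rw [hGx, Real.mul_rpow h1δ.le hUt.le] at h1''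
      calc B * ((1-δ:ℝ) ^ (-α)) * L2 = t * ((1-δ:ℝ)^(-α) * (U t)^(-α) * L2) := by
            rw [hBdef]; ring
      _ > 1 := h1''
    have h4 : (1-δ:ℝ) ≤ (1-δ:ℝ) ^ α := by
      have := Real.rpow_le_rpow_of_exponent_ge h1δ (by linarith) hα1.le
      rwa [Real.rpow_one] at this
    have h5 : L2 ≤ (1+δ) * L1 := by
      rw [div_lt_iff₀ hℓU] at hrat
      linarith
    have hBL2 : B * L2 > (1-δ:ℝ) ^ α := by
      have hm1 := mul_lt_mul_of_pos_right h1' hc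
      have h3' : B * L2 * ((1-δ:ℝ)^(-α) * (1-δ:ℝ)^α) = B * L2 := by rw [h3]; ring
      nlinarith [hm1, h3']
    have hBL1 : B * L1 > 1 - 2*δ := by
      have h6 : B * L2 ≤ B * ((1+δ) * L1) := mul_le_mul_of_nonneg_left h5 hBpos.le
      have h7 : (1-δ:ℝ) < (1+δ) * (B*L1) := by nlinarith [hBL2, h4, h6]
      nlinarith [h7, hδ0, sq_nonneg δ]
    have htG : t * G (U t) = B * L1 := by rw [hGU, hBdef]; ring
    rw [Real.dist_eq, abs_lt]
    constructor
    · rw [htG]; linarith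
    · linarith
  -- (B) : t * G (U t * w) → w ^ (-α)
  have hB : ∀ w : ℝ, 0 < w → Tendsto (fun t => t * G (U t * w)) atTop (nhds (w ^ (-α))) := by
    intro w hw
    have hlim : Tendsto (fun t => (t * G (U t)) * (w ^ (-α)) * (ℓ (w * U t) / ℓ (U t))) atTop
        (nhds (1 * w ^ (-α) * 1)) :=
      (hB1.mul tendsto_const_nhds).mul ((hℓslow w hw).comp hUtop)
    rw [one_mul, mul_one] at hlim
    apply hlim.congr'
    filter_upwards [hUpos] with t hUt
    have hGU : G (U t) = (U t) ^ (-α) * ℓ (U t) := hGtail _ hUt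
    have hGUw : G (U t * w) = (U t * w) ^ (-α) * ℓ (U t * w) := hGtail _ (by positivity)
    have hm : (U t * w) ^ (-α) = (U t) ^ (-α) * w ^ (-α) := Real.mul_rpow hUt.le hw.le
    have hℓU : ℓ (U t) ≠ 0 := (hℓpos _ hUt).ne'
    rw [hGU, hGUw, hm, mul_comm w (U t)]
    field_simp
  -- the limit point v
  set v : ℝ := z ^ (-(1/α)) with hvdef
  have hv0 : 0 < v := Real.rpow_pos_of_pos hz _
  have hvz : v ^ (-α) = z := vz_pow' α z hα0 hz
  clear_value v
  have htz : Tendsto (fun t : ℝ => t / z) atTop atTop := tendsto_id.atTop_div_const hz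
  -- first term : t * G (U (t/z)) → z
  have hT1 : Tendsto (fun t => t * G (U (t / z))) atTop (nhds z) := by
    have h := (hB1.comp htz).const_mul z
    rw [mul_one] at h
    apply h.congr'
    refine Eventually.of_forall (fun t => ?_)
    show z * ((t / z) * G (U (t / z))) = t * G (U (t / z))
    field_simp
  -- (C) : U(t/z) / U t → v
  have hC : Tendsto (fun t => U (t / z) / U t) atTop (nhds v) := by
    rw [Metric.tendsto_nhds]
    intro ε hε
    set e : ℝ := min (ε/2) (v/2) with hedef
    have he0 : 0 < e := lt_min (by linarith) (by linarith)
    have heε : e ≤ ε/2 := min_le_left _ _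
    have hev2 : e ≤ v/2 := min_le_right _ _
    clear_value e
    have hw10 : (0:ℝ) < v + e := by linarith
    have hw20 : (0:ℝ) < v - e := by linarith
    have hw1z : (v + e) ^ (-α) < z := by
      rw [← hvz]
      exact Real.rpow_lt_rpow_of_neg hv0 (by linarith) (by linarith)
    have hw2z : z < (v - e) ^ (-α) := by
      rw [← hvz]
      exact Real.rpow_lt_rpow_of_neg hw20 (by linarith) (by linarith)
    have hevA : ∀ᶠ t : ℝ in atTop, t * G (U t * (v + e)) < z :=
      (hB (v+e) hw10).eventually (eventually_lt_nhds hw1z)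
    have hevB : ∀ᶠ t : ℝ in atTop, z < t * G (U t * (v - e)) :=
      (hB (v-e) hw20).eventually (eventually_gt_nhds hw2z)
    filter_upwards [hevA, hevB, hUpos, eventually_gt_atTop (1:ℝ),
      htz.eventually (eventually_gt_atTop (1:ℝ))] with t h1 h2 hUt h1t h1tz
    have ht0 : (0:ℝ) < t := lt_trans one_pos h1t
    have h1div : 1 / (t/z) = z / t := by rw [one_div_div]
    have hupper : U (t/z) ≤ U t * (v + e) := by
      apply hUle (t/z) h1tz
      rw [h1div]
      have hGlt : G (U t * (v + e)) < z / t := by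
        rw [lt_div_iff₀ ht0]; linarith [h1]
      simp only [hGdef] at hGlt
      linarith
    have hlower : U t * (v - e) ≤ U (t/z) := by
      apply hUge (t/z) h1tz
      rw [h1div]
      have hGgt : z / t < G (U t * (v - e)) := by
        rw [div_lt_iff₀ ht0]; linarith [h2]
      simp only [hGdef] at hGgt
      linarith
    rw [Real.dist_eq, abs_lt]
    constructor
    · have hh : v - e ≤ U (t/z) / U t := by
        rw [le_div_iff₀ hUt, mul_comm]; linarith [hlower]
      linarith
    · have hh : U (t/z) / U t ≤ v + e := by
        rw [div_le_iff₀ hUt, mul_comm]; linarith [hupper]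
      linarith
  -- (D) : uniform bound
  set C : ℝ := (v/2) ^ (-α) + 1 with hCdef
  have hδ0pos : (0:ℝ) < v/2 := by linarith
  have hD : ∀ᶠ t : ℝ in atTop, ∀ w, v/2 ≤ w → t * G (U t * w) ≤ C := by
    have hev := (hB (v/2) hδ0pos).eventually (eventually_lt_nhds
      (show (v/2:ℝ)^(-α) < C by rw [hCdef]; linarith))
    filter_upwards [hev, hUpos, eventually_gt_atTop (0:ℝ)] with t h1 hUt ht0 w hw
    have hGle : G (U t * w) ≤ G (U t * (v/2)) :=
      hGanti (by nlinarith)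
    calc t * G (U t * w) ≤ t * G (U t * (v/2)) := by nlinarith
    _ ≤ C := h1.le
  -- second-term limit via dominated convergence
  have hmeasG : Measurable G := measurable_const.sub hFmono.measurable
  set I : ℝ := ∫ w in Ioi v, u * Real.exp (-(u * w)) * w ^ (-α) with hIdef
  have hT2 : Tendsto (fun t => ∫ w in Ioi (v/2), (Ioi (U (t/z) / U t)).indicator
      (fun w => u * Real.exp (-(u*w)) * (t * G (U t * w))) w) atTop (nhds I) := by
    have hφeq : ∫ w in Ioi (v/2), (Ioi v).indicator
        (fun w => u * Real.exp (-(u*w)) * w ^ (-α)) w = I := by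
      rw [integral_indicator measurableSet_Ioi, Measure.restrict_restrict measurableSet_Ioi,
        Ioi_inter_Ioi, sup_eq_left.2 (by linarith : v/2 ≤ v), hIdef]
    rw [← hφeq]
    refine tendsto_integral_filter_of_dominated_convergence
      (fun w => (u*C) * Real.exp (-(u*w))) ?_ ?_ ?_ ?_
    · refine Eventually.of_forall (fun t => ?_)
      refine AEStronglyMeasurable.indicator ?_ measurableSet_Ioi
      refine Measurable.aestronglyMeasurable ?_
      have hm1 : Measurable fun w : ℝ => u * Real.exp (-(u*w)) :=
        (Real.measurable_exp.comp ((measurable_id.const_mul u).neg)).const_mul u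
      exact hm1.mul ((hmeasG.comp (measurable_id.const_mul (U t))).const_mul t)
    · filter_upwards [hD, eventually_ge_atTop (0:ℝ)] with t hDt ht0
      filter_upwards [ae_restrict_mem measurableSet_Ioi] with w hw
      have hE : (0:ℝ) < Real.exp (-(u*w)) := Real.exp_pos _
      by_cases hmem : w ∈ Ioi (U (t/z)/U t)
      · rw [indicator_of_mem hmem]
        have h1 : 0 ≤ t * G (U t * w) := mul_nonneg ht0 (hGnonneg _)
        have h2 : t * G (U t * w) ≤ C := hDt w (le_of_lt hw)
        rw [Real.norm_eq_abs, abs_of_nonneg (by positivity)]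
        have h3 := mul_le_mul_of_nonneg_left h2 (by positivity : (0:ℝ) ≤ u * Real.exp (-(u*w)))
        nlinarith [h3]
      · rw [indicator_of_notMem hmem]
        have hC0 : (0:ℝ) < C := by
          rw [hCdef]; positivity
        simp only [norm_zero]
        positivity
    · simpa [neg_mul] using (exp_neg_integrableOn_Ioi (v/2) hu).const_mul (u*C)
    · have hne : ∀ᵐ w : ℝ, w ≠ v := by
        rw [ae_iff]
        have : {w : ℝ | ¬ w ≠ v} = {v} := by ext w; simp
        rw [this]
        exact measure_singleton v
      filter_upwards [ae_restrict_mem measurableSet_Ioi, ae_restrict_of_ae hne] with w hw hwv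
      have hw0 : 0 < w := lt_trans hδ0pos hw
      rcases lt_or_gt_of_ne hwv with hwltv | hwgtv
      · -- w < v : both sides zero
        have hev : ∀ᶠ t : ℝ in atTop, w < U (t/z) / U t :=
          hC.eventually (eventually_gt_nhds hwltv)
        rw [indicator_of_notMem (by simp only [mem_Ioi]; linarith : w ∉ Ioi v)]
        apply Tendsto.congr' _ tendsto_const_nhds
        filter_upwards [hev] with t ht
        rw [indicator_of_notMem (by simp only [mem_Ioi]; push_neg; linarith : w ∉ Ioi (U (t/z)/U t))]
      · -- v < w
        have hev : ∀ᶠ t : ℝ in atTop, U (t/z) / U t < w :=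
          hC.eventually (eventually_lt_nhds hwgtv)
        rw [indicator_of_mem (by exact hwgtv : w ∈ Ioi v)]
        have hlim := (hB w hw0).const_mul (u * Real.exp (-(u*w)))
        have hlim2 : Tendsto (fun t => u * Real.exp (-(u*w)) * (t * G (U t * w))) atTop
            (nhds (u * Real.exp (-(u*w)) * w ^ (-α))) := hlim
        apply Tendsto.congr' _ hlim2
        filter_upwards [hev] with t ht
        rw [indicator_of_mem (by exact ht : w ∈ Ioi (U (t/z)/U t))]
  -- exp factor limit
  have hexpC : Tendsto (fun t => Real.exp (-(u * (U (t/z) / U t)))) atTop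
      (nhds (Real.exp (-(u*v)))) :=
    (Real.continuous_exp.tendsto _).comp ((hC.const_mul u).neg)
  -- eventual identity
  have hevEq : ∀ᶠ t : ℝ in atTop,
      (t * G (U (t/z))) * Real.exp (-(u * (U (t/z) / U t)))
        - ∫ w in Ioi (v/2), (Ioi (U (t/z) / U t)).indicator
            (fun w => u * Real.exp (-(u*w)) * (t * G (U t * w))) w
      = t * ∫ x in Set.Ioi (U (t / z)), Real.exp (-(u * x / U t)) ∂ν := by
    filter_upwards [hUpos, eventually_gt_atTop (1:ℝ),
      hC.eventually (eventually_gt_nhds (by linarith : v/2 < v))] with t hUt h1t hrt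
    have ht0 : (0:ℝ) < t := lt_trans one_pos h1t
    have hc0 : 0 < u / U t := div_pos hu hUt
    have hstep1 : ∫ x in Set.Ioi (U (t / z)), Real.exp (-(u * x / U t)) ∂ν
        = ∫ x in Set.Ioi (U (t / z)), Real.exp (-((u / U t) * x)) ∂ν := by
      congr 1
      funext x
      rw [mul_div_right_comm]
    rw [hstep1, exp_tail_identity ν (u / U t) (U (t/z)) hc0]
    have harg : u / U t * U (t/z) = u * (U (t/z) / U t) := by field_simp
    have hargE : Real.exp (-(u / U t * U (t/z))) = Real.exp (-(u * (U (t/z) / U t))) := by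
      rw [harg]
    have hcomp := integral_comp_mul_left_Ioi
      (fun y => (u / U t) * Real.exp (-((u / U t) * y)) * (ν (Ioi y)).toReal)
      (U (t/z) / U t) hUt
    rw [mul_div_cancel₀ _ hUt.ne'] at hcomp
    have h6 : ∫ y in Ioi (U (t/z)), (u / U t) * Real.exp (-((u / U t) * y)) * (ν (Ioi y)).toReal
        = U t * ∫ w in Ioi (U (t/z) / U t),
            (u / U t) * Real.exp (-((u / U t) * (U t * w))) * (ν (Ioi (U t * w))).toReal := by
      rw [hcomp, smul_eq_mul, ← mul_assoc, mul_inv_cancel₀ hUt.ne', one_mul]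
    have hLHS : ∫ w in Ioi (v/2), (Ioi (U (t/z) / U t)).indicator
        (fun w => u * Real.exp (-(u*w)) * (t * G (U t * w))) w
        = ∫ w in Ioi (U (t/z) / U t), u * Real.exp (-(u*w)) * (t * G (U t * w)) := by
      rw [integral_indicator measurableSet_Ioi, Measure.restrict_restrict measurableSet_Ioi,
        Ioi_inter_Ioi, sup_eq_left.2 (le_of_lt hrt)]
    have hind : ∫ w in Ioi (v/2), (Ioi (U (t/z) / U t)).indicator
        (fun w => u * Real.exp (-(u*w)) * (t * G (U t * w))) w
        = t * ∫ y in Ioi (U (t/z)),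
            (u / U t) * Real.exp (-((u / U t) * y)) * (ν (Ioi y)).toReal := by
      rw [hLHS, h6, ← mul_assoc, ← MeasureTheory.integral_const_mul]
      refine setIntegral_congr_fun measurableSet_Ioi (fun w _ => ?_)
      rw [hνG (U t * w)]
      have harg2 : u / U t * (U t * w) = u * w := by field_simp
      rw [harg2]
      field_simp
    rw [hind, hargE, hνG (U (t/z))]
    ring
  have hgoal_eq : z * ∫ ρ in Set.Ioo (0:ℝ) 1, Real.exp (-(u * (z * ρ) ^ (-(1 / α))))
      = z * Real.exp (-(u*v)) - I := by
    rw [hIdef, hvdef]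
    exact final_identity α z u hα0 hα1 hz hu
  rw [hgoal_eq]
  exact ((hT1.mul hexpC).sub hT2).congr' hevEq
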